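/- (Lemma 2) For every integer k ≥ q, the stacked prediction error of Algorithm 1's prediction step satisfies ‖𝐱_{k+1|k} − 𝐱*(t_{k+1})‖ ≤ ((q+1)/q)·‖𝐱_k − 𝐱*(t_k)‖ + (1/q)·‖𝐱_{k−q} − 𝐱*(t_{k−q})‖ + c₂·√N·(q+1)·h²/2. -/

import Mathlib

open Set in
lemma taylor_bound {E : Type*} [NormedAddCommGroup E] [NormedSpace ℝ E]
    (f f' f'' : ℝ → E) (hf : ∀ t, HasDerivAt f (f' t) t)
    (hf' : ∀ t, HasDerivAt f' (f'' t) t) (c : ℝ) (hc : ∀ t, ‖f'' t‖ ≤ c)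
    (a s : ℝ) (hs : 0 ≤ s) :
    ‖f (a + s) - f a - s • f' a‖ ≤ c * s ^ 2 / 2 := by
  have hc0 : 0 ≤ c := le_trans (norm_nonneg _) (hc 0)
  set g : ℝ → E := fun t => f t - f a - (t - a) • f' a with hg
  have hg' : ∀ t, HasDerivAt g (f' t - f' a) t := by
    intro t
    have : HasDerivAt (fun t => (t - a) • f' a) ((1 : ℝ) • f' a) t := by
      simpa using (((hasDerivAt_id t).sub (hasDerivAt_const t a))).smul_const (f' a)
    have h2 := ((hf t).sub (hasDerivAt_const t (f a))).sub this
    rw [one_smul, sub_zero] at h2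
    exact h2
  have hstep : ∀ t ∈ Icc a (a + s), ‖f' t - f' a‖ ≤ c * (t - a) := by
    intro t ht
    exact norm_image_sub_le_of_norm_deriv_le_segment'
      (fun x _ => (hf' x).hasDerivWithinAt) (fun x _ => hc x) t ht
  have key : ∀ x ∈ Icc a (a + s), ‖g x‖ ≤ c * (x - a) ^ 2 / 2 := by
    have hB : ∀ x : ℝ, HasDerivAt (fun x => c * (x - a) ^ 2 / 2) (c * (x - a)) x := by
      intro x
      have : HasDerivAt (fun x : ℝ => c * (x - a) ^ 2 / 2)
          (c * (2 * (x - a) ^ 1 * 1) / 2) x := by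
        simpa using (((((hasDerivAt_id x).sub (hasDerivAt_const x a)).pow 2).const_mul c).div_const 2)
      simpa [mul_comm, mul_assoc, mul_div_assoc] using this
    refine fun x hx => image_norm_le_of_norm_deriv_right_le_deriv_boundary
      (f' := fun t => f' t - f' a)
      (fun x _ => (hg' x).continuousAt.continuousWithinAt) ?_ ?_ hB ?_ hx
    · intro x _; simpa using (hg' x).hasDerivWithinAt
    · simp [hg]
    · intro x hx
      have := hstep x ⟨hx.1, hx.2.le⟩
      simpa using this
  have := key (a + s) ⟨by linarith, le_refl _⟩
  simpa [hg] using this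

lemma taylor_bound_neg {E : Type*} [NormedAddCommGroup E] [NormedSpace ℝ E]
    (f f' f'' : ℝ → E) (hf : ∀ t, HasDerivAt f (f' t) t)
    (hf' : ∀ t, HasDerivAt f' (f'' t) t) (c : ℝ) (hc : ∀ t, ‖f'' t‖ ≤ c)
    (a s : ℝ) (hs : 0 ≤ s) :
    ‖f (a - s) - f a + s • f' a‖ ≤ c * s ^ 2 / 2 := by
  have hlin : ∀ t : ℝ, HasDerivAt (fun t : ℝ => 2 * a - t) (-1 : ℝ) t := fun t => by
    have h2 := (hasDerivAt_const t (2 * a)).sub (hasDerivAt_id t)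
    rw [zero_sub] at h2
    exact h2
  have hg : ∀ t, HasDerivAt (fun t => f (2 * a - t)) ((-1 : ℝ) • f' (2 * a - t)) t :=
    fun t => (hf (2 * a - t)).scomp t (hlin t)
  have hg' : ∀ t, HasDerivAt (fun t => (-1 : ℝ) • f' (2 * a - t)) (f'' (2 * a - t)) t := by
    intro t
    have := ((hf' (2 * a - t)).scomp t (hlin t)).const_smul (-1 : ℝ)
    convert this using 1 <;> simp [smul_smul, Function.comp_def, Pi.neg_def]
  have := taylor_bound (fun t => f (2 * a - t)) (fun t => (-1 : ℝ) • f' (2 * a - t))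
    (fun t => f'' (2 * a - t)) hg hg' c (fun t => hc _) a s hs
  have h1 : 2 * a - (a + s) = a - s := by ring
  have h2 : 2 * a - a = a := by ring
  simpa [h1, h2, smul_smul, sub_neg_eq_add] using this

/-- Lemma 2: for `k ≥ q`, the stacked prediction error of Algorithm 1's
prediction step `𝐱_{k+1|k} = ((q+1)/q)·𝐱_k − (1/q)·𝐱_{k−q}` satisfies
`‖𝐱_{k+1|k} − 𝐱*(t_{k+1})‖ ≤ ((q+1)/q)‖𝐱_k − 𝐱*(t_k)‖ + (1/q)‖𝐱_{k−q} − 𝐱*(t_{k−q})‖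
  + c₂·√N·(q+1)·h²/2`. -/
theorem prediction_error_bound
    (N : ℕ) (hN : 0 < N)
    (xstar xd xdd : ℝ → EuclideanSpace ℝ (Fin N))
    (hx1 : ∀ t, HasDerivAt xstar (xd t) t) (hx2 : ∀ t, HasDerivAt xd (xdd t) t)
    (c₂ : ℝ) (hc₂ : ∀ t, ‖xdd t‖ ≤ c₂)
    (h : ℝ) (hh : 0 < h) (q : ℕ) (hq : 0 < q)
    (X : ℕ → PiLp 2 (fun _ : Fin N => EuclideanSpace ℝ (Fin N)))
    (Xstar : ℝ → PiLp 2 (fun _ : Fin N => EuclideanSpace ℝ (Fin N)))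
    (hXstar : ∀ t i, Xstar t i = xstar t)
    (k : ℕ) (hk : q ≤ k) :
    ‖(((q : ℝ) + 1) / q) • X k - ((1 : ℝ) / q) • X (k - q) - Xstar (((k : ℝ) + 1) * h)‖
      ≤ (((q : ℝ) + 1) / q) * ‖X k - Xstar ((k : ℝ) * h)‖
        + (1 / (q : ℝ)) * ‖X (k - q) - Xstar (((k - q : ℕ) : ℝ) * h)‖
        + c₂ * Real.sqrt N * ((q : ℝ) + 1) * h ^ 2 / 2 := by
  have hq0 : (0 : ℝ) < q := by exact_mod_cast hq
  have hc0 : 0 ≤ c₂ := le_trans (norm_nonneg _) (hc₂ 0)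
  set a : ℝ := (k : ℝ) * h with ha
  have hcast : ((k - q : ℕ) : ℝ) = (k : ℝ) - q := by
    push_cast [Nat.cast_sub hk]; ring
  have ht1 : ((k : ℝ) + 1) * h = a + h := by rw [ha]; ring
  have htq : ((k - q : ℕ) : ℝ) * h = a - (q : ℝ) * h := by rw [hcast, ha]; ring
  -- Taylor estimates for the scalar curve
  have T1 : ‖xstar (a + h) - xstar a - h • xd a‖ ≤ c₂ * h ^ 2 / 2 :=
    taylor_bound xstar xd xdd hx1 hx2 c₂ hc₂ a h hh.le
  have T2 : ‖xstar (a - (q : ℝ) * h) - xstar a + ((q : ℝ) * h) • xd a‖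
      ≤ c₂ * ((q : ℝ) * h) ^ 2 / 2 :=
    taylor_bound_neg xstar xd xdd hx1 hx2 c₂ hc₂ a ((q : ℝ) * h) (by positivity)
  set r : EuclideanSpace ℝ (Fin N) :=
    (((q : ℝ) + 1) / q) • xstar a - ((1 : ℝ) / q) • xstar (a - (q : ℝ) * h) - xstar (a + h)
    with hrdef
  have hr : ‖r‖ ≤ c₂ * ((q : ℝ) + 1) * h ^ 2 / 2 := by
    have hrid : r = -(xstar (a + h) - xstar a - h • xd a)
        - ((1 : ℝ) / q) • (xstar (a - (q : ℝ) * h) - xstar a + ((q : ℝ) * h) • xd a) := by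
      rw [hrdef]
      match_scalars <;> field_simp <;> ring
    calc ‖r‖ ≤ ‖xstar (a + h) - xstar a - h • xd a‖
          + ((1 : ℝ) / q) * ‖xstar (a - (q : ℝ) * h) - xstar a + ((q : ℝ) * h) • xd a‖ := by
          rw [hrid]
          refine le_trans (norm_sub_le _ _) ?_
          rw [norm_neg, norm_smul, Real.norm_eq_abs, abs_of_pos (by positivity)]
      _ ≤ c₂ * h ^ 2 / 2 + ((1 : ℝ) / q) * (c₂ * ((q : ℝ) * h) ^ 2 / 2) := by
          gcongr
      _ = c₂ * ((q : ℝ) + 1) * h ^ 2 / 2 := by field_simp; ring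
  -- the stacked extrapolation remainder
  set R : PiLp 2 (fun _ : Fin N => EuclideanSpace ℝ (Fin N)) :=
    (((q : ℝ) + 1) / q) • Xstar ((k : ℝ) * h) - ((1 : ℝ) / q) • Xstar (((k - q : ℕ) : ℝ) * h)
      - Xstar (((k : ℝ) + 1) * h) with hRdef
  have hRfun : R = fun _ : Fin N => r := by
    funext i
    rw [hRdef]
    simp only [PiLp.sub_apply, PiLp.smul_apply, hXstar, hrdef, ht1, htq]
    rfl
  have hRnorm : ‖R‖ = Real.sqrt N * ‖r‖ := by
    rw [PiLp.norm_eq_of_L2, hRfun]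
    simp only [Finset.sum_const, Finset.card_univ, Fintype.card_fin, nsmul_eq_mul]
    rw [Real.sqrt_mul (Nat.cast_nonneg N), Real.sqrt_sq (norm_nonneg r)]
  have hdecomp : (((q : ℝ) + 1) / q) • X k - ((1 : ℝ) / q) • X (k - q)
      - Xstar (((k : ℝ) + 1) * h)
      = (((q : ℝ) + 1) / q) • (X k - Xstar ((k : ℝ) * h))
        + (-(((1 : ℝ) / q) • (X (k - q) - Xstar (((k - q : ℕ) : ℝ) * h)))) + R := by
    rw [hRdef]; module
  rw [hdecomp]
  calc ‖_ + _ + R‖ ≤ ‖(((q : ℝ) + 1) / q) • (X k - Xstar ((k : ℝ) * h))‖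
        + ‖-(((1 : ℝ) / q) • (X (k - q) - Xstar (((k - q : ℕ) : ℝ) * h)))‖ + ‖R‖ :=
      norm_add₃_le
    _ = (((q : ℝ) + 1) / q) * ‖X k - Xstar ((k : ℝ) * h)‖
        + (1 / (q : ℝ)) * ‖X (k - q) - Xstar (((k - q : ℕ) : ℝ) * h)‖
        + Real.sqrt N * ‖r‖ := by
      rw [norm_neg, norm_smul, norm_smul, hRnorm, Real.norm_eq_abs, Real.norm_eq_abs,
        abs_of_pos (by positivity : (0:ℝ) < ((q : ℝ) + 1) / q),
        abs_of_pos (by positivity : (0:ℝ) < (1 : ℝ) / q)]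
    _ ≤ (((q : ℝ) + 1) / q) * ‖X k - Xstar ((k : ℝ) * h)‖
        + (1 / (q : ℝ)) * ‖X (k - q) - Xstar (((k - q : ℕ) : ℝ) * h)‖
        + c₂ * Real.sqrt N * ((q : ℝ) + 1) * h ^ 2 / 2 := by
      have hfin : Real.sqrt N * ‖r‖ ≤ c₂ * Real.sqrt N * ((q : ℝ) + 1) * h ^ 2 / 2 := by
        calc Real.sqrt N * ‖r‖ ≤ Real.sqrt N * (c₂ * ((q : ℝ) + 1) * h ^ 2 / 2) := by
              gcongr
          _ = c₂ * Real.sqrt N * ((q : ℝ) + 1) * h ^ 2 / 2 := by ring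
      linarith
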